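/- Let fL, fU : ℝⁿ → ℝ be strictly convex functions with fL ≤ fU pointwise, g_j : ℝⁿ → ℝ convex, X = {x : g_j(x) ≤ 0 ∀j}, 0 ≤ εL ≤ εU, and x* ∈ X. Suppose there exist μL, μU ≥ 0 with μL + μU > 0, λ_j ≥ 0 with λ_j g_j(x*) = 0, zL ∈ ∂fL(x*), zU ∈ ∂fU(x*), u_j ∈ ∂g_j(x*), and b with ‖b‖ ≤ 1, such that μL·zL + μU·zU + Σ_j λ_j u_j + (μL·εU + μU·εL)·b = 0. Then x* is an E-quasi-LU-solution: there is no x ∈ X with fL(x) ≤ fL(x*) − εU‖x − x*‖ and fU(x) ≤ fU(x*) − εL‖x − x*‖ with at least one of the two inequalities strict. -/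

import Mathlib

/-- The convex subdifferential of φ at x*. -/
def subdiff {n : ℕ} (φ : EuclideanSpace ℝ (Fin n) → ℝ)
    (xs : EuclideanSpace ℝ (Fin n)) : Set (EuclideanSpace ℝ (Fin n)) :=
  {v | ∀ x, φ x - φ xs ≥ (inner ℝ v (x - xs) : ℝ)}

lemma strict_subdiff {n : ℕ} {φ : EuclideanSpace ℝ (Fin n) → ℝ}
    (hφ : StrictConvexOn ℝ Set.univ φ) {xs v x : EuclideanSpace ℝ (Fin n)}
    (hv : v ∈ subdiff φ xs) (hx : x ≠ xs) :
    (inner ℝ v (x - xs) : ℝ) < φ x - φ xs := by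
  have hm := hφ.2 (Set.mem_univ x) (Set.mem_univ xs) hx
    (by norm_num : (0:ℝ) < 1/2) (by norm_num : (0:ℝ) < 1/2) (by norm_num)
  have hs := hv ((1/2:ℝ) • x + (1/2:ℝ) • xs)
  have hmid : ((1/2:ℝ) • x + (1/2:ℝ) • xs) - xs = (1/2:ℝ) • (x - xs) := by
    module
  rw [hmid, real_inner_smul_right] at hs
  simp only [smul_eq_mul] at hm
  linarith

theorem KKT_sufficient_E_quasi_LU (n m : ℕ)
    (fL fU : EuclideanSpace ℝ (Fin n) → ℝ)
    (hfL : StrictConvexOn ℝ Set.univ fL) (hfU : StrictConvexOn ℝ Set.univ fU)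
    (hf : ∀ x, fL x ≤ fU x)
    (g : Fin m → EuclideanSpace ℝ (Fin n) → ℝ)
    (hg : ∀ j, ConvexOn ℝ Set.univ (g j))
    (εL εU : ℝ) (hεL : 0 ≤ εL) (hε : εL ≤ εU)
    (xs : EuclideanSpace ℝ (Fin n)) (hxs : ∀ j, g j xs ≤ 0)
    (μL μU : ℝ) (hμL : 0 ≤ μL) (hμU : 0 ≤ μU) (hμ : 0 < μL + μU)
    (lam : Fin m → ℝ) (hlam : ∀ j, 0 ≤ lam j) (hcomp : ∀ j, lam j * g j xs = 0)
    (zL zU : EuclideanSpace ℝ (Fin n)) (hzL : zL ∈ subdiff fL xs) (hzU : zU ∈ subdiff fU xs)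
    (u : Fin m → EuclideanSpace ℝ (Fin n)) (hu : ∀ j, u j ∈ subdiff (g j) xs)
    (b : EuclideanSpace ℝ (Fin n)) (hb : ‖b‖ ≤ 1)
    (heq : μL • zL + μU • zU + ∑ j, lam j • u j + (μL * εU + μU * εL) • b = 0) :
    ¬ ∃ x, (∀ j, g j x ≤ 0) ∧
      (fL x ≤ fL xs - εU * ‖x - xs‖ ∧ fU x ≤ fU xs - εL * ‖x - xs‖) ∧
      (fL x < fL xs - εU * ‖x - xs‖ ∨ fU x < fU xs - εL * ‖x - xs‖) := by
  rintro ⟨x, hxX, ⟨hL, hU⟩, hstrict⟩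
  by_cases hxe : x = xs
  · subst hxe
    rcases hstrict with h | h <;> simp at h
  · set d := x - xs with hd_def
    have hd : 0 < ‖d‖ := norm_pos_iff.mpr (sub_ne_zero.mpr hxe)
    have h0 : (inner ℝ (μL • zL + μU • zU + ∑ j, lam j • u j
        + (μL * εU + μU * εL) • b) d : ℝ) = 0 := by
      rw [heq]; exact inner_zero_left d
    simp only [inner_add_left, real_inner_smul_left, sum_inner] at h0
    have hA : (inner ℝ zL d : ℝ) < fL x - fL xs := strict_subdiff hfL hzL hxe
    have hB : (inner ℝ zU d : ℝ) < fU x - fU xs := strict_subdiff hfU hzU hxe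
    have hS : ∑ j, lam j * (inner ℝ (u j) d : ℝ) ≤ 0 := by
      apply Finset.sum_nonpos
      intro j _
      have h1 : (inner ℝ (u j) d : ℝ) ≤ g j x - g j xs := hu j x
      have h2 : lam j * (inner ℝ (u j) d : ℝ) ≤ lam j * (g j x - g j xs) :=
        mul_le_mul_of_nonneg_left h1 (hlam j)
      have h3 : lam j * (g j x - g j xs) = lam j * g j x := by
        rw [mul_sub, hcomp j]; ring
      have h4 : lam j * g j x ≤ 0 := mul_nonpos_of_nonneg_of_nonpos (hlam j) (hxX j)
      linarith
    have hib : (inner ℝ b d : ℝ) ≤ ‖d‖ := by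
      have h1 := abs_real_inner_le_norm b d
      have h2 : ‖b‖ * ‖d‖ ≤ 1 * ‖d‖ := mul_le_mul_of_nonneg_right hb hd.le
      have := le_abs_self (inner ℝ b d : ℝ)
      linarith
    have hεU : 0 ≤ εU := le_trans hεL hε
    have hcnn : 0 ≤ μL * εU + μU * εL := by positivity
    have hcb : (μL * εU + μU * εL) * (inner ℝ b d : ℝ) ≤ (μL * εU + μU * εL) * ‖d‖ :=
      mul_le_mul_of_nonneg_left hib hcnn
    -- key bounds on objective terms
    have hAb : μL * (inner ℝ zL d : ℝ) ≤ μL * (-(εU * ‖d‖)) := by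
      have : (inner ℝ zL d : ℝ) ≤ -(εU * ‖d‖) := by linarith
      exact mul_le_mul_of_nonneg_left this hμL
    have hBb : μU * (inner ℝ zU d : ℝ) ≤ μU * (-(εL * ‖d‖)) := by
      have : (inner ℝ zU d : ℝ) ≤ -(εL * ‖d‖) := by linarith
      exact mul_le_mul_of_nonneg_left this hμU
    rcases lt_or_ge 0 μL with hpos | hle
    · have hAs : μL * (inner ℝ zL d : ℝ) < μL * (-(εU * ‖d‖)) := by
        have : (inner ℝ zL d : ℝ) < -(εU * ‖d‖) := by linarith
        exact mul_lt_mul_of_pos_left this hpos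
      nlinarith
    · have hμUpos : 0 < μU := by linarith
      have hBs : μU * (inner ℝ zU d : ℝ) < μU * (-(εL * ‖d‖)) := by
        have : (inner ℝ zU d : ℝ) < -(εL * ‖d‖) := by linarith
        exact mul_lt_mul_of_pos_left this hμUpos
      nlinarith
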